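/- For every finite simple graph G on n ≥ 2 vertices, the number of spanning trees satisfies τ(G) ≤ ((Tr(Δ) − Δ_max)/(n−1))^{n−1}, where Δ is the diagonal degree matrix of G and Δ_max its maximum degree. -/

import Mathlib

open Matrix
open scoped Classical

/-- Adjacency matrix of a simple graph, as a real matrix. -/
noncomputable def adjMat {n : ℕ} (G : SimpleGraph (Fin n)) : Matrix (Fin n) (Fin n) ℝ :=
  Matrix.of fun i j => if G.Adj i j then (1 : ℝ) else 0

/-- Diagonal degree matrix of a simple graph. -/
noncomputable def degMat {n : ℕ} (G : SimpleGraph (Fin n)) : Matrix (Fin n) (Fin n) ℝ :=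
  Matrix.diagonal fun i => (Nat.card (G.neighborSet i) : ℝ)

/-- Combinatorial Laplacian. -/
noncomputable def lapMat {n : ℕ} (G : SimpleGraph (Fin n)) : Matrix (Fin n) (Fin n) ℝ :=
  degMat G - adjMat G

/-- Number of spanning trees of `G`: spanning subgraphs of `G` that are trees. -/
noncomputable def numSpanningTrees {n : ℕ} (G : SimpleGraph (Fin n)) : ℕ :=
  Nat.card {H : SimpleGraph (Fin n) // H ≤ G ∧ H.IsTree}

/-- Matrix logarithm via functional calculus (log of eigenvalues), with log 0 = 0. -/
noncomputable def matLog {n : ℕ} (M : Matrix (Fin n) (Fin n) ℝ) : Matrix (Fin n) (Fin n) ℝ :=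
  if hM : M.IsHermitian then
    (hM.eigenvectorUnitary : Matrix (Fin n) (Fin n) ℝ) *
      Matrix.diagonal (fun i => Real.log (hM.eigenvalues i)) *
      star (hM.eigenvectorUnitary : Matrix (Fin n) (Fin n) ℝ)
  else 0

/-- Quantum relative entropy S(σ₁‖σ₂) = Tr(σ₁ log σ₁) − Tr(σ₁ log σ₂). -/
noncomputable def qRelEntropy {n : ℕ} (σ1 σ2 : Matrix (Fin n) (Fin n) ℝ) : ℝ :=
  (σ1 * matLog σ1).trace - (σ1 * matLog σ2).trace

/-- Projection Π_ℓ = I − E_ℓℓ. -/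
noncomputable def projP {n : ℕ} (ℓ : Fin n) : Matrix (Fin n) (Fin n) ℝ :=
  1 - Matrix.single ℓ ℓ 1

/-- Q_ℓ = E_ℓℓ. -/
noncomputable def projQ {n : ℕ} (ℓ : Fin n) : Matrix (Fin n) (Fin n) ℝ :=
  Matrix.single ℓ ℓ 1

/-- Pinching map Φ_ℓ. -/
noncomputable def pinch {n : ℕ} (ℓ : Fin n) (M : Matrix (Fin n) (Fin n) ℝ) :
    Matrix (Fin n) (Fin n) ℝ :=
  projP ℓ * M * projP ℓ + projQ ℓ * M * projQ ℓ

/-- Maximum degree. -/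
noncomputable def maxDeg {n : ℕ} (G : SimpleGraph (Fin n)) : ℕ :=
  Finset.univ.sup fun i => Nat.card (G.neighborSet i)


noncomputable def upath {n : ℕ} {H : SimpleGraph (Fin n)} (hH : H.IsTree) (i ℓ : Fin n) :
    H.Walk i ℓ :=
  (hH.existsUnique_path i ℓ).choose

lemma upath_isPath {n : ℕ} {H : SimpleGraph (Fin n)} (hH : H.IsTree) (i ℓ : Fin n) :
    (upath hH i ℓ).IsPath :=
  (hH.existsUnique_path i ℓ).choose_spec.1

lemma upath_unique {n : ℕ} {H : SimpleGraph (Fin n)} (hH : H.IsTree) (i ℓ : Fin n)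
    (p : H.Walk i ℓ) (hp : p.IsPath) : p = upath hH i ℓ :=
  (hH.existsUnique_path i ℓ).choose_spec.2 p hp

noncomputable def theParent {n : ℕ} {H : SimpleGraph (Fin n)} (hH : H.IsTree) (ℓ i : Fin n) :
    Fin n :=
  (upath hH i ℓ).getVert 1

lemma upath_length_pos {n : ℕ} {H : SimpleGraph (Fin n)} (hH : H.IsTree) {i ℓ : Fin n}
    (hne : i ≠ ℓ) : 0 < (upath hH i ℓ).length :=
  Nat.pos_of_ne_zero fun h => hne (SimpleGraph.Walk.eq_of_length_eq_zero h)

lemma adj_theParent {n : ℕ} {H : SimpleGraph (Fin n)} (hH : H.IsTree) {i ℓ : Fin n}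
    (hne : i ≠ ℓ) : H.Adj i (theParent hH ℓ i) := by
  have := (upath hH i ℓ).adj_getVert_succ (i := 0) (upath_length_pos hH hne)
  simpa [theParent] using this

lemma parent_char {n : ℕ} {H : SimpleGraph (Fin n)} (hH : H.IsTree) (ℓ : Fin n) {u v : Fin n}
    (huv : H.Adj u v) :
    (u ≠ ℓ ∧ theParent hH ℓ u = v) ∨ (v ≠ ℓ ∧ theParent hH ℓ v = u) := by
  classical
  set q := upath hH v ℓ with hqdef
  have hqp : q.IsPath := upath_isPath hH v ℓ
  by_cases hu : u ∈ q.support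
  · right
    set p := q.dropUntil u hu with hpdef
    have hpp : p.IsPath := hqp.dropUntil hu
    have hvp : v ∉ p.support := by
      intro hv
      have hnd : ((q.takeUntil u hu).support ++ p.support.tail).Nodup := by
        have h := hqp.support_nodup
        rwa [← q.take_spec hu, SimpleGraph.Walk.support_append] at h
      have hvt : v ∈ (q.takeUntil u hu).support := (q.takeUntil u hu).start_mem_support
      have hvtail : v ∈ p.support.tail := by
        have := List.mem_cons.mp (by rw [← p.support_eq_cons]; exact hv)
        rcases this with h | h
        · exact absurd h huv.ne'
        · exact h
      exact (List.nodup_append'.mp hnd).2.2 hvt hvtail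
    have hvl : v ≠ ℓ := fun h => hvp (by rw [h]; exact p.end_mem_support)
    refine ⟨hvl, ?_⟩
    have hcons : (SimpleGraph.Walk.cons huv.symm p).IsPath := hpp.cons hvp
    have he := upath_unique hH v ℓ _ hcons
    rw [theParent, ← he, SimpleGraph.Walk.getVert_cons_succ, SimpleGraph.Walk.getVert_zero]
  · left
    have hul : u ≠ ℓ := fun h => hu (by rw [h]; exact q.end_mem_support)
    refine ⟨hul, ?_⟩
    have hcons : (SimpleGraph.Walk.cons huv q).IsPath := hqp.cons hu
    have he := upath_unique hH u ℓ _ hcons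
    rw [theParent, ← he, SimpleGraph.Walk.getVert_cons_succ, SimpleGraph.Walk.getVert_zero]

lemma adj_of_parent_eq {n : ℕ} {H1 H2 : SimpleGraph (Fin n)} (h1 : H1.IsTree) (h2 : H2.IsTree)
    (ℓ : Fin n) (hp : ∀ i, i ≠ ℓ → theParent h1 ℓ i = theParent h2 ℓ i)
    {u v : Fin n} (huv : H1.Adj u v) : H2.Adj u v := by
  rcases parent_char h1 ℓ huv with ⟨hu, hpu⟩ | ⟨hv, hpv⟩
  · have h := adj_theParent h2 hu
    rwa [← hp u hu, hpu] at h
  · have h := adj_theParent h2 hv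
    rw [← hp v hv, hpv] at h
    exact h.symm

lemma tree_eq_of_parent_eq {n : ℕ} {H1 H2 : SimpleGraph (Fin n)} (h1 : H1.IsTree)
    (h2 : H2.IsTree) (ℓ : Fin n)
    (hp : ∀ i, i ≠ ℓ → theParent h1 ℓ i = theParent h2 ℓ i) : H1 = H2 := by
  ext u v
  exact ⟨adj_of_parent_eq h1 h2 ℓ hp,
    adj_of_parent_eq h2 h1 ℓ (fun i hi => (hp i hi).symm)⟩

lemma card_bound {n : ℕ} (G : SimpleGraph (Fin n)) (ℓ : Fin n) :
    numSpanningTrees G ≤ ∏ i ∈ Finset.univ.erase ℓ, Nat.card (G.neighborSet i) := by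
  classical
  have hinj : Function.Injective
      (fun H : {H : SimpleGraph (Fin n) // H ≤ G ∧ H.IsTree} =>
        (fun i : {i : Fin n // i ≠ ℓ} =>
          (⟨theParent H.2.2 ℓ i.1, H.2.1 (adj_theParent H.2.2 i.2)⟩ :
            G.neighborSet i.1))) := by
    intro H1 H2 heq
    apply Subtype.ext
    refine tree_eq_of_parent_eq H1.2.2 H2.2.2 ℓ (fun i hi => ?_)
    exact Subtype.ext_iff.mp (congrFun heq ⟨i, hi⟩)
  have hle := Nat.card_le_card_of_injective _ hinj
  refine le_trans hle ?_
  rw [Nat.card_pi]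
  rw [Finset.prod_subtype (p := fun i => i ≠ ℓ) (Finset.univ.erase ℓ)
    (fun x => by simp [Finset.mem_erase]) (fun i => Nat.card (G.neighborSet i))]

lemma prod_le_avg_pow {ι : Type*} (s : Finset ι) (hs : s.Nonempty) (x : ι → ℝ)
    (hx : ∀ i ∈ s, 0 ≤ x i) :
    ∏ i ∈ s, x i ≤ ((∑ i ∈ s, x i) / s.card) ^ s.card := by
  have hc : (0:ℝ) < s.card := by exact_mod_cast Finset.card_pos.mpr hs
  have h1 := Real.geom_mean_le_arith_mean_weighted s (fun _ => (s.card : ℝ)⁻¹) x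
    (fun i _ => by positivity)
    (by rw [Finset.sum_const, nsmul_eq_mul]; field_simp)
    hx
  have hsum : ∑ i ∈ s, (s.card:ℝ)⁻¹ * x i = (∑ i ∈ s, x i) / s.card := by
    rw [← Finset.mul_sum]; ring
  rw [hsum] at h1
  have hP : 0 ≤ ∏ i ∈ s, x i := Finset.prod_nonneg hx
  have h2 : (∏ i ∈ s, x i ^ ((s.card:ℝ)⁻¹)) ^ ((s.card : ℕ) : ℝ) ≤
      ((∑ i ∈ s, x i) / s.card) ^ ((s.card : ℕ) : ℝ) :=
    Real.rpow_le_rpow (Finset.prod_nonneg fun i hi => Real.rpow_nonneg (hx i hi) _) h1 hc.le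
  calc ∏ i ∈ s, x i
      = (∏ i ∈ s, x i ^ ((s.card:ℝ)⁻¹)) ^ ((s.card : ℕ) : ℝ) := by
        rw [Real.finset_prod_rpow s x hx, ← Real.rpow_mul hP, inv_mul_cancel₀ hc.ne',
          Real.rpow_one]
    _ ≤ ((∑ i ∈ s, x i) / s.card) ^ ((s.card : ℕ) : ℝ) := h2
    _ = ((∑ i ∈ s, x i) / s.card) ^ s.card := Real.rpow_natCast _ _

/-- τ(G) ≤ ((Tr(Δ) − Δ_max)/(n−1))^{n−1}. -/
theorem numSpanningTrees_le_reduced_avgDeg_pow (n : ℕ) (hn : 2 ≤ n)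
    (G : SimpleGraph (Fin n)) :
    (numSpanningTrees G : ℝ) ≤
      (((degMat G).trace - (maxDeg G : ℝ)) / ((n : ℝ) - 1)) ^ (n - 1) := by
  classical
  have : NeZero n := ⟨by omega⟩
  have hne : (Finset.univ : Finset (Fin n)).Nonempty := Finset.univ_nonempty
  obtain ⟨ℓ, -, hℓ⟩ := Finset.exists_mem_eq_sup (Finset.univ : Finset (Fin n)) hne
    (fun i => Nat.card (G.neighborSet i))
  set d : Fin n → ℝ := fun i => (Nat.card (G.neighborSet i) : ℝ) with hd
  have hτ : (numSpanningTrees G : ℝ) ≤ ∏ i ∈ Finset.univ.erase ℓ, d i := by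
    have h := card_bound G ℓ
    calc (numSpanningTrees G : ℝ)
        ≤ ((∏ i ∈ Finset.univ.erase ℓ, Nat.card (G.neighborSet i) : ℕ) : ℝ) := by
          exact_mod_cast h
      _ = ∏ i ∈ Finset.univ.erase ℓ, d i := by push_cast [hd]; rfl
  have hcard : (Finset.univ.erase ℓ).card = n - 1 := by
    rw [Finset.card_erase_of_mem (Finset.mem_univ ℓ), Finset.card_univ, Fintype.card_fin]
  have hsne : (Finset.univ.erase ℓ).Nonempty := by
    rw [← Finset.card_pos, hcard]; omega
  have hAM := prod_le_avg_pow _ hsne d (fun i _ => by positivity)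
  rw [hcard] at hAM
  have hsum : ∑ i ∈ Finset.univ.erase ℓ, d i = (degMat G).trace - (maxDeg G : ℝ) := by
    have h1 : ∑ i ∈ Finset.univ.erase ℓ, d i + d ℓ = ∑ i, d i :=
      Finset.sum_erase_add _ _ (Finset.mem_univ ℓ)
    have h2 : (degMat G).trace = ∑ i, d i := by
      rw [degMat, Matrix.trace_diagonal]
    have h3 : (maxDeg G : ℝ) = d ℓ := by rw [maxDeg, hℓ]
    rw [h2, h3]; linarith
  have hcast : ((n - 1 : ℕ) : ℝ) = (n : ℝ) - 1 := by
    have : 1 ≤ n := by omega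
    push_cast [this]; ring
  rw [hsum, hcast] at hAM
  exact le_trans hτ hAM
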